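/- arXiv:1601.01025 — 2 statements merged into one kernel-verified Lean document; each statement's English description precedes it below -/
import Mathlib

section
/- Inexact proximal inequality: let E be a real inner product space, f : E → ℝ convex, β > 0, ε ≥ 0, and points x, x⁺ with β(x − x⁺) ∈ ∂_ε f(x⁺). Then for every a ∈ E: ‖x⁺ − a‖² ≤ ‖x − a‖² − ‖x⁺ − x‖² + (2/β)(f(a) − f(x⁺)) + 2ε/β. -/
theorem stmt_15 {E : Type*} [NormedAddCommGroup E] [InnerProductSpace ℝ E]
    (f : E → ℝ) (hf : ConvexOn ℝ Set.univ f) (β ε : ℝ) (hβ : 0 < β) (hε : 0 ≤ ε)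
    (x xp : E)
    (hsub : ∀ y : E, f y ≥ f xp + inner ℝ (β • (x - xp)) (y - xp) - ε) :
    ∀ a : E, ‖xp - a‖ ^ 2 ≤
      ‖x - a‖ ^ 2 - ‖xp - x‖ ^ 2 + 2 / β * (f a - f xp) + 2 * ε / β := by
  intro a
  have h := hsub a
  rw [real_inner_smul_left] at h
  have hip : (inner ℝ (x - xp) (a - xp) : ℝ) ≤ (f a - f xp + ε) / β := by
    rw [le_div_iff₀ hβ]; nlinarith
  have hid : ‖x - a‖ ^ 2 = ‖x - xp‖ ^ 2 + ‖xp - a‖ ^ 2 + 2 * inner ℝ (x - xp) (xp - a) := by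
    have := norm_add_sq_real (x - xp) (xp - a)
    rw [sub_add_sub_cancel] at this; linarith
  have h2 : (inner ℝ (x - xp) (xp - a) : ℝ) = - inner ℝ (x - xp) (a - xp) := by
    rw [← inner_neg_right]; congr 1; abel
  have hn : ‖xp - x‖ = ‖x - xp‖ := norm_sub_rev _ _
  rw [hid, hn, h2]
  have hb : 2 / β * (f a - f xp) + 2 * ε / β = 2 * ((f a - f xp + ε) / β) := by ring
  nlinarith [hip, hb]
end

section
/- Fejér-type distance bound in the inexact proximal method: under the assumptions that β_k > 0, ε_k ≥ 0, β_k(a_k − a_{k+1}) ∈ ∂_{ε_k} f(a_{k+1}), and ε_k/β_k ≤ (μ_k/2)·d²(a_{k+1}, a_k) for some μ_k ∈ (0, μ] with μ ∈ (0,1), and a* is a minimizer of f, then 2(ε_k/β_k)(1/μ − 1) ≤ d²(a_k, a*) for every k. -/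
theorem stmt_16 {E : Type*} [NormedAddCommGroup E] [InnerProductSpace ℝ E]
    (f : E → ℝ) (hf : ConvexOn ℝ Set.univ f)
    (a : ℕ → E) (β ε μk : ℕ → ℝ) (μ : ℝ) (hμ0 : 0 < μ) (hμ1 : μ < 1)
    (hβ : ∀ k, 0 < β k) (hε : ∀ k, 0 ≤ ε k)
    (hμk : ∀ k, 0 < μk k ∧ μk k ≤ μ)
    (hsub : ∀ k, ∀ y : E,
      f y ≥ f (a (k + 1)) + inner ℝ ((β k) • (a k - a (k + 1))) (y - a (k + 1)) - ε k)
    (herr : ∀ k, ε k / β k ≤ μk k / 2 * ‖a (k + 1) - a k‖ ^ 2)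
    (astar : E) (hstar : ∀ y : E, f astar ≤ f y) :
    ∀ k, 2 * (ε k / β k) * (1 / μ - 1) ≤ ‖a k - astar‖ ^ 2 := by
  intro k
  set u := a k - a (k + 1) with hu
  set v := a (k + 1) - astar with hv
  have hβk := hβ k
  have hεβ : 0 ≤ ε k / β k := div_nonneg (hε k) hβk.le
  -- inner product bound from subdifferential inequality
  have h1 := hsub k astar
  have hstar' := hstar (a (k + 1))
  have hinner : (-(ε k / β k) : ℝ) ≤ inner ℝ u v := by
    have hin : (inner ℝ ((β k) • u) (astar - a (k + 1)) : ℝ) = β k * inner ℝ u (-v) := by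
      rw [real_inner_smul_left]
      congr 1
      rw [hv, neg_sub]
    have h2 : β k * inner ℝ u (-v) ≤ ε k := by
      have := h1
      rw [hin] at this
      linarith
    have h3 : inner ℝ u (-v) ≤ ε k / β k := (le_div_iff₀' hβk).mpr h2
    have h4 : (inner ℝ u (-v) : ℝ) = - inner ℝ u v := by
      simp [inner_neg_right]
    linarith [h3, h4.symm ▸ h3]
  -- norm expansion
  have hexp : ‖a k - astar‖ ^ 2 = ‖u‖ ^ 2 + 2 * inner ℝ u v + ‖v‖ ^ 2 := by
    have : a k - astar = u + v := by rw [hu, hv]; abel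
    rw [this, norm_add_sq_real]
  -- error bound
  have hμkk := hμk k
  have hun : ‖a (k + 1) - a k‖ = ‖u‖ := by rw [hu, norm_sub_rev]
  have herr' : ε k / β k ≤ μk k / 2 * ‖u‖ ^ 2 := by
    have := herr k; rwa [hun] at this
  have hu2 : 2 * (ε k / β k) / μ ≤ ‖u‖ ^ 2 := by
    have h5 : 2 * (ε k / β k) / μk k ≤ ‖u‖ ^ 2 := by
      rw [div_le_iff₀ hμkk.1]
      nlinarith [herr']
    have h6 : 2 * (ε k / β k) / μ ≤ 2 * (ε k / β k) / μk k :=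
      div_le_div_of_nonneg_left (by linarith) hμkk.1 hμkk.2
    linarith
  have hv2 : (0:ℝ) ≤ ‖v‖ ^ 2 := sq_nonneg _
  have : 2 * (ε k / β k) * (1 / μ - 1) = 2 * (ε k / β k) / μ - 2 * (ε k / β k) := by
    field_simp
  rw [this, hexp]
  linarith
end
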